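/- For any two probability mass functions p₀ and p on a finite set S, and any function c : S → ℝ with |c(s)| ≤ M for all s, |Σ_s c(s) p₀(s) − Σ_s c(s) p(s)| ≤ 2M·√(1 − exp(−KL(p₀ ‖ p))). -/

import Mathlib

open Real BigOperators

/-- For pmfs `p₀, p` on a finite set `S` (with `p(s) > 0` whenever
`p₀(s) > 0`) and `c : S → ℝ` with `|c(s)| ≤ M`,
`|Σ c p₀ − Σ c p| ≤ 2M·√(1 − exp(−KL(p₀‖p)))` (Bretagnolle–Huber bound). -/
theorem expectation_gap_bretagnolle_huber
    {S : Type*} [Fintype S]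
    (p₀ p : S → ℝ)
    (hp₀ : ∀ s, 0 ≤ p₀ s) (hp : ∀ s, 0 ≤ p s)
    (habs : ∀ s, 0 < p₀ s → 0 < p s)
    (hp₀sum : ∑ s, p₀ s = 1) (hpsum : ∑ s, p s = 1)
    (c : S → ℝ) (M : ℝ) (hM : 0 ≤ M)
    (hc : ∀ s, |c s| ≤ M) :
    |(∑ s, c s * p₀ s) - ∑ s, c s * p s| ≤
      2 * M * Real.sqrt (1 - Real.exp (-(∑ s, p₀ s * Real.log (p₀ s / p s)))) := by
  classical
  set K := ∑ s, p₀ s * Real.log (p₀ s / p s) with hK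
  set m := ∑ s, min (p₀ s) (p s) with hm
  have hm0 : 0 ≤ m := Finset.sum_nonneg fun s _ => le_min (hp₀ s) (hp s)
  have hm1 : m ≤ 1 := by
    rw [hm, ← hp₀sum]
    exact Finset.sum_le_sum fun s _ => min_le_left _ _
  have hmaxsum : ∑ s, max (p₀ s) (p s) = 2 - m := by
    have h : ∀ s : S, max (p₀ s) (p s) = p₀ s + p s - min (p₀ s) (p s) := by
      intro s
      rcases le_total (p₀ s) (p s) with h | h
      · rw [max_eq_right h, min_eq_left h]; ring
      · rw [max_eq_left h, min_eq_right h]; ring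
    simp_rw [h]
    rw [Finset.sum_sub_distrib, Finset.sum_add_distrib, hp₀sum, hpsum, ← hm]
    ring
  -- Jensen: exp(-(K/2)) ≤ ∑ √(p₀ p)
  have hjensen : Real.exp (-(K / 2)) ≤ ∑ s, Real.sqrt (p₀ s * p s) := by
    have hj := convexOn_exp.map_sum_le (t := Finset.univ) (w := p₀)
      (p := fun s => Real.log (Real.sqrt (p s / p₀ s)))
      (fun s _ => hp₀ s) hp₀sum (fun s _ => Set.mem_univ _)
    have h1 : ∑ s, p₀ s • Real.log (Real.sqrt (p s / p₀ s)) = -(K / 2) := by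
      rw [hK, Finset.sum_div, ← Finset.sum_neg_distrib]
      refine Finset.sum_congr rfl fun s _ => ?_
      rcases eq_or_lt_of_le (hp₀ s) with h | h
      · simp [← h]
      · have hps := habs s h
        rw [smul_eq_mul, Real.log_sqrt (div_nonneg (hp s) (hp₀ s)),
          Real.log_div hps.ne' h.ne', Real.log_div h.ne' hps.ne']
        ring
    have h2 : ∀ s : S, p₀ s • Real.exp (Real.log (Real.sqrt (p s / p₀ s)))
        = Real.sqrt (p₀ s * p s) := by
      intro s
      rcases eq_or_lt_of_le (hp₀ s) with h | h
      · simp [← h]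
      · have hps := habs s h
        have hd : 0 < Real.sqrt (p s / p₀ s) :=
          Real.sqrt_pos.2 (div_pos hps h)
        rw [smul_eq_mul, Real.exp_log hd]
        rw [show p₀ s = Real.sqrt (p₀ s ^ 2) by rw [Real.sqrt_sq h.le],
          ← Real.sqrt_mul (by positivity)]
        congr 1
        field_simp
        ring_nf; rw [Real.sq_sqrt (by positivity)]
      -- done
    rw [h1] at hj
    calc Real.exp (-(K / 2)) ≤ ∑ s, p₀ s • Real.exp (Real.log (Real.sqrt (p s / p₀ s))) := hj
      _ = ∑ s, Real.sqrt (p₀ s * p s) := Finset.sum_congr rfl fun s _ => h2 s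
  -- Cauchy-Schwarz: ∑ √(p₀ p) ≤ √m √(2-m)
  have hcs : ∑ s, Real.sqrt (p₀ s * p s) ≤ Real.sqrt m * Real.sqrt (2 - m) := by
    have h : ∀ s : S, Real.sqrt (p₀ s * p s)
        = Real.sqrt (min (p₀ s) (p s)) * Real.sqrt (max (p₀ s) (p s)) := by
      intro s
      rw [← Real.sqrt_mul (le_min (hp₀ s) (hp s))]
      congr 1
      rcases le_total (p₀ s) (p s) with h | h
      · rw [min_eq_left h, max_eq_right h]
      · rw [min_eq_right h, max_eq_left h]; ring
    simp_rw [h]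
    rw [hm, ← hmaxsum]
    exact Real.sum_sqrt_mul_sqrt_le _ (fun s => le_min (hp₀ s) (hp s))
      (fun s => le_max_of_le_left (hp₀ s))
  have h2m : (0:ℝ) ≤ 2 - m := by linarith
  -- exp(-K) ≤ m (2 - m)
  have hexp : Real.exp (-K) ≤ m * (2 - m) := by
    have h : Real.exp (-K) = Real.exp (-(K / 2)) ^ 2 := by
      rw [sq, ← Real.exp_add]; ring_nf
    rw [h]
    calc Real.exp (-(K / 2)) ^ 2 ≤ (Real.sqrt m * Real.sqrt (2 - m)) ^ 2 := by
          apply sq_le_sq' <;> nlinarith [Real.exp_pos (-(K/2)), hjensen.trans hcs]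
      _ = m * (2 - m) := by
          rw [mul_pow, Real.sq_sqrt hm0, Real.sq_sqrt h2m]
  -- 1 - m ≤ √(1 - exp(-K))
  have hroot : 1 - m ≤ Real.sqrt (1 - Real.exp (-K)) := by
    have h : (1 - m) = Real.sqrt ((1 - m) ^ 2) := (Real.sqrt_sq (by linarith)).symm
    rw [h]
    apply Real.sqrt_le_sqrt
    nlinarith
  -- main bound
  have habsdiff : ∀ s : S, |p₀ s - p s| = max (p₀ s) (p s) - min (p₀ s) (p s) := by
    intro s
    rcases le_total (p₀ s) (p s) with h | h
    · rw [max_eq_right h, min_eq_left h, abs_of_nonpos (by linarith)]; ring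
    · rw [max_eq_left h, min_eq_right h, abs_of_nonneg (by linarith)]
  have hsumabs : ∑ s, |p₀ s - p s| = 2 * (1 - m) := by
    simp_rw [habsdiff]
    rw [Finset.sum_sub_distrib, hmaxsum, ← hm]; ring
  calc |(∑ s, c s * p₀ s) - ∑ s, c s * p s|
      = |∑ s, c s * (p₀ s - p s)| := by
        rw [← Finset.sum_sub_distrib]; congr 1
        exact Finset.sum_congr rfl fun s _ => by ring
    _ ≤ ∑ s, |c s * (p₀ s - p s)| := Finset.abs_sum_le_sum_abs _ _
    _ ≤ ∑ s, M * |p₀ s - p s| := by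
        refine Finset.sum_le_sum fun s _ => ?_
        rw [abs_mul]
        exact mul_le_mul_of_nonneg_right (hc s) (abs_nonneg _)
    _ = M * (2 * (1 - m)) := by rw [← Finset.mul_sum, hsumabs]
    _ ≤ 2 * M * Real.sqrt (1 - Real.exp (-K)) := by nlinarith
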